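/- For the SO(3)-reduced ODE system dA/dt = S̃A, dS/dt = −tr(S̃)·S + 2 det(S)·I − C² − C̃ + (1/4)(tr C)²·I with C = −det(A)·A·Aᵀ and B = C − (1/2)tr(C)·I: if [S,B] = 0 at some time t₀, then [S,B] = 0 for all t (the commutation constraint is preserved by the flow), assuming A(t) is invertible and S(t) is positive definite for all t. -/

import Mathlib

open Matrix

attribute [local instance] Matrix.normedAddCommGroup Matrix.normedSpace

private lemma hasDerivAt_matrix {f : ℝ → Matrix (Fin 3) (Fin 3) ℝ} {f' : Matrix (Fin 3) (Fin 3) ℝ}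
    {t : ℝ} :
    HasDerivAt f f' t ↔ ∀ i j, HasDerivAt (fun s => f s i j) (f' i j) t := by
  constructor
  · intro h i j
    exact hasDerivAt_pi.1 (hasDerivAt_pi.1 h i) j
  · intro h
    exact hasDerivAt_pi.2 (fun i => hasDerivAt_pi.2 (fun j => h i j))

private lemma hasDerivAt_matMul {f g : ℝ → Matrix (Fin 3) (Fin 3) ℝ}
    {f' g' : Matrix (Fin 3) (Fin 3) ℝ}
    {t : ℝ} (hf : HasDerivAt f f' t) (hg : HasDerivAt g g' t) :
    HasDerivAt (fun s => f s * g s) (f' * g t + f t * g') t := by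
  rw [hasDerivAt_matrix] at hf hg ⊢
  intro i j
  have H := HasDerivAt.fun_sum (fun k (_ : k ∈ Finset.univ) => (hf i k).mul (hg k j))
  simp only [Matrix.mul_apply, Matrix.add_apply]
  refine H.congr_deriv ?_
  rw [Finset.sum_add_distrib]

private lemma hasDerivAt_transpose {f : ℝ → Matrix (Fin 3) (Fin 3) ℝ}
    {f' : Matrix (Fin 3) (Fin 3) ℝ}
    {t : ℝ} (hf : HasDerivAt f f' t) :
    HasDerivAt (fun s => (f s)ᵀ) f'ᵀ t := by
  rw [hasDerivAt_matrix] at hf ⊢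
  intro i j
  simpa using hf j i

private lemma hasDerivAt_det3 {f : ℝ → Matrix (Fin 3) (Fin 3) ℝ} {f' : Matrix (Fin 3) (Fin 3) ℝ}
    {t : ℝ} (hf : HasDerivAt f f' t) :
    HasDerivAt (fun s => (f s).det) ((Matrix.adjugate (f t) * f').trace) t := by
  rw [hasDerivAt_matrix] at hf
  simp only [Matrix.det_fin_three]
  have H := (((((((hf 0 0).mul (hf 1 1)).mul (hf 2 2)).sub
    (((hf 0 0).mul (hf 1 2)).mul (hf 2 1))).sub
    (((hf 0 1).mul (hf 1 0)).mul (hf 2 2))).add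
    (((hf 0 1).mul (hf 1 2)).mul (hf 2 0))).add
    (((hf 0 2).mul (hf 1 0)).mul (hf 2 1))).sub
    (((hf 0 2).mul (hf 1 1)).mul (hf 2 0))
  refine H.congr_deriv ?_
  simp [Matrix.trace_fin_three, Matrix.mul_apply, Matrix.adjugate_fin_three,
    Matrix.vecMul, dotProduct, Fin.sum_univ_three]
  ring

private lemma key_identity (s c : Matrix (Fin 3) (Fin 3) ℝ) (a b : ℝ) :
    ((-(s.adjugate.trace) • s + a • 1 - c*c - c.adjugate + b • 1) * c
      + s * (s.adjugate.trace • c + s.adjugate * c + c * s.adjugate))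
    - ((s.adjugate.trace • c + s.adjugate * c + c * s.adjugate) * s
      + c * (-(s.adjugate.trace) • s + a • 1 - c*c - c.adjugate + b • 1))
    = s.adjugate * (s*c - c*s) + (s*c - c*s) * s.adjugate := by
  have h1 : s * s.adjugate = s.adjugate * s := by
    rw [Matrix.mul_adjugate, Matrix.adjugate_mul]
  have h2 : c * c.adjugate = c.adjugate * c := by
    rw [Matrix.mul_adjugate, Matrix.adjugate_mul]
  have e1 : s * (s.adjugate * c) = s.adjugate * (s * c) := by
    rw [← Matrix.mul_assoc, h1, Matrix.mul_assoc]
  have e2 : c * (s.adjugate * s) = c * (s * s.adjugate) := by rw [h1]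
  simp only [add_mul, mul_add, sub_mul, mul_sub, smul_mul_assoc, mul_smul_comm,
    neg_smul, Matrix.one_mul, Matrix.mul_one, neg_mul, mul_neg, Matrix.mul_assoc]
  rw [h2, e1, e2]
  module

private lemma norm_matMul_le (P Q : Matrix (Fin 3) (Fin 3) ℝ) :
    ‖P * Q‖ ≤ 3 * (‖P‖ * ‖Q‖) := by
  rw [Matrix.norm_le_iff (by positivity)]
  intro i j
  calc ‖(P * Q) i j‖ = ‖∑ k, P i k * Q k j‖ := by rw [Matrix.mul_apply]
    _ ≤ ∑ k, ‖P i k * Q k j‖ := norm_sum_le _ _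
    _ ≤ ∑ _k : Fin 3, ‖P‖ * ‖Q‖ := by
        refine Finset.sum_le_sum (fun k _ => ?_)
        rw [norm_mul]
        exact mul_le_mul (Matrix.norm_entry_le_entrywise_sup_norm P)
          (Matrix.norm_entry_le_entrywise_sup_norm Q) (norm_nonneg _) (norm_nonneg _)
    _ = 3 * (‖P‖ * ‖Q‖) := by simp [Finset.sum_const]

private lemma gronwall_forward {W Sa : ℝ → Matrix (Fin 3) (Fin 3) ℝ}
    (hSa : Continuous fun t => ‖Sa t‖)
    (hW : ∀ t, HasDerivAt W (Sa t * W t + W t * Sa t) t)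
    {t₀ b : ℝ} (h0 : W t₀ = 0) (hb : t₀ ≤ b) : W b = 0 := by
  obtain ⟨M, hM⟩ := (isCompact_Icc (a := t₀) (b := b)).exists_bound_of_continuousOn
    hSa.continuousOn
  have hWc : Continuous W := by
    rw [continuous_iff_continuousAt]; exact fun t => (hW t).continuousAt
  have key := norm_le_gronwallBound_of_norm_deriv_right_le (f := W)
      (f' := fun x => Sa x * W x + W x * Sa x) (δ := 0) (K := 6 * M) (ε := 0)
      (a := t₀) (b := b)
      hWc.continuousOn
      (fun x _ => (hW x).hasDerivWithinAt)
      (by simp [h0])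
      (fun x hx => ?_) b (Set.right_mem_Icc.2 hb)
  · rw [gronwallBound_ε0_δ0] at key
    exact norm_le_zero_iff.1 key
  · have hMx : ‖Sa x‖ ≤ M := by
      simpa using hM x (Set.Ico_subset_Icc_self hx)
    have h1 := norm_matMul_le (Sa x) (W x)
    have h2 := norm_matMul_le (W x) (Sa x)
    have h3 := norm_add_le (Sa x * W x) (W x * Sa x)
    have h4 : (0:ℝ) ≤ ‖W x‖ := norm_nonneg _
    have h5 : (0:ℝ) ≤ ‖Sa x‖ := norm_nonneg _
    nlinarith

private lemma gronwall_zero {W Sa : ℝ → Matrix (Fin 3) (Fin 3) ℝ}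
    (hSa : Continuous fun t => ‖Sa t‖)
    (hW : ∀ t, HasDerivAt W (Sa t * W t + W t * Sa t) t)
    {t₀ : ℝ} (h0 : W t₀ = 0) : ∀ t, W t = 0 := by
  intro t
  rcases le_total t₀ t with h | h
  · exact gronwall_forward hSa hW h0 h
  · -- time reversal
    set V : ℝ → Matrix (Fin 3) (Fin 3) ℝ := fun s => W (2 * t₀ - s) with hV
    set Ta : ℝ → Matrix (Fin 3) (Fin 3) ℝ := fun s => -Sa (2 * t₀ - s) with hTa
    have hVd : ∀ s, HasDerivAt V (Ta s * V s + V s * Ta s) s := by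
      intro s
      have hinner : HasDerivAt (fun s : ℝ => 2 * t₀ - s) (-1) s := by
        exact (hasDerivAt_id s).const_sub (2 * t₀)
      have := (hW (2 * t₀ - s)).scomp s hinner
      refine this.congr_deriv ?_
      simp [hTa, hV, neg_mul, mul_neg, neg_add]
    have hTan : Continuous fun s => ‖Ta s‖ := by
      have : Continuous fun s : ℝ => 2 * t₀ - s := by continuity
      have h := hSa.comp this
      simp only [hTa, norm_neg]
      exact h
    have h0' : V t₀ = 0 := by
      simp only [hV]
      rw [show 2 * t₀ - t₀ = t₀ by ring, h0]
    have := gronwall_forward hTan hVd h0' (b := 2 * t₀ - t) (by linarith)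
    simpa [hV, show 2 * t₀ - (2 * t₀ - t) = t by ring] using this

theorem commutation_constraint_preserved
    (A S C B : ℝ → Matrix (Fin 3) (Fin 3) ℝ) (t₀ : ℝ)
    (hC : ∀ t, C t = -((A t).det • (A t * (A t)ᵀ)))
    (hB : ∀ t, B t = C t - ((1 / 2 : ℝ) * (C t).trace) • (1 : Matrix (Fin 3) (Fin 3) ℝ))
    (hAinv : ∀ t, IsUnit (A t).det)
    (hSpos : ∀ t, (S t).PosDef)
    (hAflow : ∀ t, ∀ i j, HasDerivAt (fun s => A s i j) (((S t).adjugate * A t) i j) t)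
    (hSflow : ∀ t, ∀ i j, HasDerivAt (fun s => S s i j)
      ((-(((S t).adjugate).trace) • S t + (2 * (S t).det) • (1 : Matrix (Fin 3) (Fin 3) ℝ)
        - C t * C t - (C t).adjugate
        + ((1 / 4 : ℝ) * (C t).trace ^ 2) • (1 : Matrix (Fin 3) (Fin 3) ℝ)) i j) t)
    (h0 : S t₀ * B t₀ = B t₀ * S t₀) :
    ∀ t, S t * B t = B t * S t := by
  -- commutation with B is the same as commutation with C
  have hBC : ∀ t, S t * B t - B t * S t = S t * C t - C t * S t := by
    intro t
    rw [hB t]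
    simp only [mul_sub, sub_mul, mul_smul_comm, smul_mul_assoc, Matrix.mul_one, Matrix.one_mul]
    abel
  set Sa : ℝ → Matrix (Fin 3) (Fin 3) ℝ := fun t => (S t).adjugate with hSadef
  have hA : ∀ t, HasDerivAt A (Sa t * A t) t := fun t => hasDerivAt_matrix.2 (hAflow t)
  have hSd : ∀ t, HasDerivAt S
      (-((Sa t).trace) • S t + (2 * (S t).det) • (1 : Matrix (Fin 3) (Fin 3) ℝ)
        - C t * C t - (C t).adjugate
        + ((1 / 4 : ℝ) * (C t).trace ^ 2) • (1 : Matrix (Fin 3) (Fin 3) ℝ)) t :=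
    fun t => hasDerivAt_matrix.2 (hSflow t)
  -- derivative of det A
  have hdet : ∀ t, HasDerivAt (fun s => (A s).det) ((A t).det * (Sa t).trace) t := by
    intro t
    have h := hasDerivAt_det3 (hA t)
    rwa [Matrix.trace_mul_comm, Matrix.mul_assoc, Matrix.mul_adjugate, mul_smul_comm,
      Matrix.mul_one, Matrix.trace_smul, smul_eq_mul] at h
  -- symmetry of adjugate of S
  have hsymm : ∀ t, (Sa t)ᵀ = Sa t := by
    intro t
    have hs : (S t)ᵀ = S t := by
      have := (hSpos t).1
      rwa [Matrix.IsHermitian, Matrix.conjTranspose_eq_transpose_of_trivial] at this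
    show ((S t).adjugate)ᵀ = (S t).adjugate
    rw [Matrix.adjugate_transpose, hs]
  -- derivative of C
  have hCd : ∀ t, HasDerivAt C ((Sa t).trace • C t + Sa t * C t + C t * Sa t) t := by
    intro t
    have hCfun : C = fun s => -((A s).det • (A s * (A s)ᵀ)) := funext hC
    rw [hCfun]
    have hAT := hasDerivAt_transpose (hA t)
    have hprod := hasDerivAt_matMul (hA t) hAT
    have hsm := ((hdet t).smul hprod).neg
    refine hsm.congr_deriv ?_
    rw [Matrix.transpose_mul, hsymm t]
    simp only [Matrix.mul_assoc, neg_add, smul_add, mul_add, ← neg_smul, mul_smul_comm,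
      smul_mul_assoc, smul_smul]
    module
  -- the commutator W
  set W : ℝ → Matrix (Fin 3) (Fin 3) ℝ := fun t => S t * C t - C t * S t with hWdef
  have hWd : ∀ t, HasDerivAt W (Sa t * W t + W t * Sa t) t := by
    intro t
    have h := (hasDerivAt_matMul (hSd t) (hCd t)).sub (hasDerivAt_matMul (hCd t) (hSd t))
    refine h.congr_deriv ?_
    exact (key_identity (S t) (C t) (2 * (S t).det) ((1 / 4 : ℝ) * (C t).trace ^ 2))
  -- continuity of ‖Sa‖
  have hScont : Continuous S := by
    rw [continuous_iff_continuousAt]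
    exact fun t => (hSd t).continuousAt
  have hSacont : Continuous fun t => ‖Sa t‖ := by
    have : Continuous Sa := hScont.matrix_adjugate
    exact this.norm
  have hW0 : W t₀ = 0 := by
    rw [hWdef]
    simp only
    rw [← hBC t₀, h0, sub_self]
  have hall := gronwall_zero hSacont hWd hW0
  intro t
  have := hall t
  rw [hWdef] at this
  simp only at this
  have h2 : S t * B t - B t * S t = 0 := by rw [hBC t]; exact this
  exact sub_eq_zero.1 h2
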